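/- Let a < b and α, β, k be real numbers. Suppose x₀ : ℝ → ℝ is twice continuously differentiable on [a,b] with x₀(a) = α, x₀(b) = β and ∫_a^b x₀(t) dt = k, and suppose x₀ minimizes arc length among all such functions, i.e. for every x : ℝ → ℝ twice continuously differentiable on [a,b] with x(a) = α, x(b) = β and ∫_a^b x(t) dt = k one has ∫_a^b √(1 + x₀'(t)²) dt ≤ ∫_a^b √(1 + x'(t)²) dt. Then either x₀ agrees on [a,b] with an affine function t ↦ p·t + q, or there exist real numbers c₁, c₂ and r > 0 such that (t − c₁)² + (x₀(t) − c₂)² = r² for all t ∈ [a,b] (the graph of x₀ is a circular arc). -/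

import Mathlib

open Set MeasureTheory intervalIntegral Function

noncomputable def gg (v : ℝ) : ℝ := v / Real.sqrt (1 + v ^ 2)

lemma one_add_sq_pos (v : ℝ) : 0 < 1 + v ^ 2 := by positivity

lemma sqrt_one_add_sq_pos (v : ℝ) : 0 < Real.sqrt (1 + v ^ 2) :=
  Real.sqrt_pos.mpr (one_add_sq_pos v)

lemma sq_sqrt_one_add (v : ℝ) : Real.sqrt (1 + v ^ 2) ^ 2 = 1 + v ^ 2 :=
  Real.sq_sqrt (one_add_sq_pos v).le

lemma one_le_sqrt_one_add (v : ℝ) : 1 ≤ Real.sqrt (1 + v ^ 2) := by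
  nlinarith [sq_sqrt_one_add v, Real.sqrt_nonneg (1 + v ^ 2), sq_nonneg v]

lemma abs_lt_sqrt_one_add (v : ℝ) : |v| < Real.sqrt (1 + v ^ 2) := by
  nlinarith [sq_sqrt_one_add v, Real.sqrt_nonneg (1 + v ^ 2), abs_nonneg v, sq_abs v]

lemma gg_abs_lt_one (v : ℝ) : |gg v| < 1 := by
  rw [gg, abs_div, abs_of_pos (sqrt_one_add_sq_pos v),
    div_lt_one (sqrt_one_add_sq_pos v)]
  exact abs_lt_sqrt_one_add v

lemma gg_sq (v : ℝ) : 1 - gg v ^ 2 = 1 / (1 + v ^ 2) := by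
  have h := (sqrt_one_add_sq_pos v).ne'
  have h2 := sq_sqrt_one_add v
  have h3 := (one_add_sq_pos v).ne'
  field_simp [gg]
  rw [gg, div_pow, h2, sub_mul, div_mul_cancel₀ _ h3]; ring

lemma sqrt_one_sub_gg_sq (v : ℝ) : Real.sqrt (1 - gg v ^ 2) = 1 / Real.sqrt (1 + v ^ 2) := by
  rw [gg_sq, one_div, one_div, Real.sqrt_inv]

lemma gg_recover (v : ℝ) : gg v / Real.sqrt (1 - gg v ^ 2) = v := by
  rw [sqrt_one_sub_gg_sq, gg]
  have h := (sqrt_one_add_sq_pos v).ne'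
  field_simp

lemma gg_continuous : Continuous gg := by
  apply Continuous.div continuous_id
  · exact (Real.continuous_sqrt.comp (by continuity))
  · intro x; exact (sqrt_one_add_sq_pos x).ne'

/-- Key pointwise inequality: second-order upper Taylor bound for √(1+·²). -/
lemma key_ineq (u w : ℝ) :
    Real.sqrt (1 + (u + w) ^ 2) ≤ Real.sqrt (1 + u ^ 2) + gg u * w + w ^ 2 / 2 := by
  set s := Real.sqrt (1 + u ^ 2) with hs
  set t := Real.sqrt (1 + (u + w) ^ 2) with ht
  have hs2 : s ^ 2 = 1 + u ^ 2 := sq_sqrt_one_add u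
  have ht2 : t ^ 2 = 1 + (u + w) ^ 2 := sq_sqrt_one_add (u + w)
  have hs1 : 1 ≤ s := one_le_sqrt_one_add u
  have ht1 : 1 ≤ t := one_le_sqrt_one_add (u + w)
  have hgg : gg u * w = u * w / s := by rw [gg]; ring
  rw [hgg]
  have hspos : 0 < s := by linarith
  have key : t * s ≤ s * s + u * w + w ^ 2 / 2 * s := by
    have hbase : 0 < s * s + u * w + w ^ 2 / 2 * s := by
      nlinarith [sq_nonneg (u + w/2), sq_nonneg w]
    nlinarith [mul_pos hspos (lt_of_lt_of_le one_pos ht1),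
      sq_nonneg (s*(1 + (u+w/2)^2) - 1),
      mul_le_mul_of_nonneg_left hs1 (sq_nonneg w), sq_nonneg (s - 1),
      mul_pos hspos hspos, sq_nonneg (u+w/2)]
  rw [← mul_le_mul_iff_of_pos_right hspos]
  have hexp : (s + u * w / s + w ^ 2 / 2) * s = s * s + u * w + w ^ 2 / 2 * s := by
    field_simp
  rw [hexp]; exact key

lemma constOn {f : ℝ → ℝ} {a b : ℝ}
    (h : ∀ x ∈ Set.Icc a b, HasDerivWithinAt f 0 (Set.Icc a b) x) :
    ∀ x ∈ Set.Icc a b, f x = f a := by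
  apply constant_of_has_deriv_right_zero
  · exact fun x hx => (h x hx).continuousWithinAt
  · intro x hx
    apply HasDerivWithinAt.mono_of_mem_nhdsWithin (h x ⟨hx.1, hx.2.le⟩)
    apply Filter.mem_of_superset (inter_mem_nhdsWithin (Set.Ici x) (Iio_mem_nhds hx.2))
    rintro y ⟨hy1, hy2⟩
    exact ⟨le_trans hx.1 hy1, hy2.le⟩

lemma zeroOn {f : ℝ → ℝ} {a b : ℝ} (hab : a < b) (hf : ContinuousOn f (Set.Icc a b))
    (h : ∀ t ∈ Set.Ioo a b, f t = 0) : ∀ t ∈ Set.Icc a b, f t = 0 := by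
  intro t ht
  have hcl : t ∈ closure (Set.Ioo a b) := by rw [closure_Ioo hab.ne]; exact ht
  have hne : (nhdsWithin t (Set.Ioo a b)).NeBot := mem_closure_iff_nhdsWithin_neBot.mp hcl
  have h1 : Filter.Tendsto f (nhdsWithin t (Set.Ioo a b)) (nhds (f t)) :=
    ((hf t ht).mono Set.Ioo_subset_Icc_self).tendsto
  have h2 : Filter.Tendsto f (nhdsWithin t (Set.Ioo a b)) (nhds 0) := by
    apply Filter.Tendsto.congr' _ tendsto_const_nhds
    filter_upwards [self_mem_nhdsWithin] with y hy
    exact (h y hy).symm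
  exact tendsto_nhds_unique h1 h2

lemma bump_avg {φ : ℝ → ℝ} (hm : AEStronglyMeasurable φ (volume : Measure ℝ))
    (hb : ∀ t, |φ t| ≤ 1) {s : ℝ} (hc : ContinuousAt φ s) {ε : ℝ} (hε : 0 < ε) :
    ∃ δ₁ > 0, ∀ (B : ContDiffBump s), B.rOut < δ₁ →
      |(∫ t, φ t * B.normed volume t) - φ s| ≤ ε := by
  obtain ⟨δ₁, hδ₁pos, hδ₁⟩ := Metric.continuousAt_iff.mp hc ε hε
  refine ⟨δ₁, hδ₁pos, fun B hB => ?_⟩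
  have hρint : Integrable (B.normed volume) volume := B.integrable_normed
  have hρnn : ∀ t, 0 ≤ B.normed volume t := fun t => B.nonneg_normed t
  have hφρ : Integrable (fun t => φ t * B.normed volume t) volume :=
    hρint.bdd_mul hm (c := 1) (ae_of_all _ fun t => by simpa using hb t)
  have hcρ : Integrable (fun t => φ s * B.normed volume t) volume := hρint.const_mul _
  have h1 : (∫ t, φ t * B.normed volume t) - φ s
      = ∫ t, (φ t - φ s) * B.normed volume t := by
    rw [show (fun t => (φ t - φ s) * B.normed volume t)
        = fun t => φ t * B.normed volume t - φ s * B.normed volume t by ext t; ring,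
      integral_sub hφρ hcρ, MeasureTheory.integral_const_mul, B.integral_normed, mul_one]
  rw [h1]
  have hpt : ∀ t, |(φ t - φ s) * B.normed volume t| ≤ ε * B.normed volume t := by
    intro t
    rcases eq_or_ne (B.normed volume t) 0 with h0 | h0
    · simp [h0]
    · have ht : t ∈ Metric.ball s B.rOut := by
        rw [← B.support_normed_eq (μ := volume)]; exact h0
      have : dist t s < δ₁ := lt_trans (Metric.mem_ball.mp ht) hB
      have := (hδ₁ this).le
      rw [abs_mul, abs_of_nonneg (hρnn t)]
      exact mul_le_mul_of_nonneg_right (by simpa [Real.dist_eq] using this) (hρnn t)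
  calc |∫ t, (φ t - φ s) * B.normed volume t|
      ≤ ∫ t, |(φ t - φ s) * B.normed volume t| := by
        simpa [abs_mul] using
          norm_integral_le_integral_norm (fun t => (φ t - φ s) * B.normed volume t)
    _ ≤ ∫ t, ε * B.normed volume t := by
        have hint2 : Integrable (fun t => (φ t - φ s) * B.normed volume t) volume := by
          apply (hφρ.sub hcρ).congr
          filter_upwards with t
          simp only [Pi.sub_apply]; ring
        exact integral_mono hint2.abs (hρint.const_mul ε) hpt
    _ = ε := by rw [MeasureTheory.integral_const_mul, B.integral_normed, mul_one]

lemma bump_moment (s : ℝ) (B : ContDiffBump s) :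
    ∫ t : ℝ, t * B.normed volume t = s := by
  have h1 : ∫ t : ℝ, t * B.normed volume t
      = ∫ u : ℝ, (u + s) * B.normed volume (u + s) := by
    rw [integral_add_right_eq_self (fun t : ℝ => t * B.normed volume t) s]
  have hint : Integrable (fun u : ℝ => B.normed volume (u + s)) volume := by
    simpa using (B.integrable_normed (μ := volume)).comp_add_right s
  have hodd : (∫ u : ℝ, u * B.normed volume (u + s)) = 0 := by
    have hsymm : ∀ u : ℝ, B.normed volume (s - u) = B.normed volume (s + u) :=
      fun u => B.normed_sub u
    have h2 : (∫ u : ℝ, u * B.normed volume (u + s))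
        = ∫ u : ℝ, (-u) * B.normed volume (-u + s) := by
      rw [← integral_neg_eq_self (fun u : ℝ => u * B.normed volume (u + s))]
    have h3 : (∫ u : ℝ, (-u) * B.normed volume (-u + s))
        = - ∫ u : ℝ, u * B.normed volume (u + s) := by
      rw [← MeasureTheory.integral_neg]
      congr 1; ext u
      have : B.normed volume (-u + s) = B.normed volume (u + s) := by
        rw [show -u + s = s - u by ring, hsymm u, add_comm]
      rw [this]; ring
    linarith [h2, h3.symm ▸ h2]
  have hmul : Integrable (fun u : ℝ => u * B.normed volume (u + s)) volume := by
    have : Continuous (fun u : ℝ => u * B.normed volume (u + s)) :=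
      continuous_id.mul (B.continuous_normed.comp (by continuity))
    apply this.integrable_of_hasCompactSupport
    have hcs : HasCompactSupport (fun u : ℝ => B.normed volume (u + s)) :=
      (B.hasCompactSupport_normed (μ := volume)).comp_homeomorph
        (Homeomorph.addRight s)
    exact hcs.mul_left
  calc ∫ t : ℝ, t * B.normed volume t
      = ∫ u : ℝ, (u + s) * B.normed volume (u + s) := h1
    _ = (∫ u : ℝ, u * B.normed volume (u + s))
        + ∫ u : ℝ, s * B.normed volume (u + s) := by
        rw [← integral_add hmul (hint.const_mul s)]
        congr 1; ext u; ring
    _ = s := by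
        rw [hodd, MeasureTheory.integral_const_mul, zero_add,
          integral_add_right_eq_self (fun t : ℝ => B.normed volume t) s,
          B.integral_normed, mul_one]

lemma bump_tmul_integrable (s : ℝ) (B : ContDiffBump s) :
    Integrable (fun t : ℝ => t * B.normed volume t) volume :=
  (continuous_id.mul B.continuous_normed).integrable_of_hasCompactSupport
    B.hasCompactSupport_normed.mul_left

lemma bump_contDiff_two (s : ℝ) (B : ContDiffBump s) :
    ContDiff ℝ 2 (B.normed (volume : Measure ℝ)) :=
  B.contDiff_normed (n := 2)

lemma integral_three {f g h : ℝ → ℝ} (hf : Integrable f volume) (hg : Integrable g volume)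
    (hh : Integrable h volume) (c₁ c₂ c₃ : ℝ) :
    ∫ t, (c₁ * f t + (c₂ * g t + c₃ * h t)) =
      c₁ * (∫ t, f t) + (c₂ * (∫ t, g t) + c₃ * (∫ t, h t)) := by
  have hg23 : Integrable (fun t => c₂ * g t + c₃ * h t) volume := by
    exact (hg.const_mul _).add (hh.const_mul _)
  rw [MeasureTheory.integral_add (hf.const_mul _) hg23,
    MeasureTheory.integral_add (hg.const_mul _) (hh.const_mul _),
    MeasureTheory.integral_const_mul, MeasureTheory.integral_const_mul, MeasureTheory.integral_const_mul]

lemma fund_lemma {a b : ℝ} (hab : a < b) (φ : ℝ → ℝ)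
    (hφm : AEStronglyMeasurable φ (volume : Measure ℝ)) (hφb : ∀ t, |φ t| ≤ 1)
    (hφc : ∀ s ∈ Set.Ioo a b, ContinuousAt φ s)
    (hbump : ∀ s ∈ Set.Ioo a b, ∀ ε > (0:ℝ), ∃ δ₁ > 0, ∀ (B : ContDiffBump s), B.rOut < δ₁ →
      |(∫ t, φ t * B.normed volume t) - φ s| ≤ ε)
    (hG0 : ∀ χ : ℝ → ℝ, ContDiff ℝ 2 χ → Function.support χ ⊆ Set.Ioo a b →
      (∫ t in a..b, χ t) = 0 → (∫ t in a..b, t * χ t) = 0 →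
      (∫ t in a..b, φ t * χ t) = 0) :
    ∀ s₁ ∈ Set.Ioo a b, ∀ s₂ ∈ Set.Ioo a b, ∀ s₃ ∈ Set.Ioo a b,
      (s₃ - s₂) * φ s₁ + (s₁ - s₃) * φ s₂ + (s₂ - s₁) * φ s₃ = 0 := by
  intro s₁ hs₁ s₂ hs₂ s₃ hs₃
  set X := (s₃ - s₂) * φ s₁ + (s₁ - s₃) * φ s₂ + (s₂ - s₁) * φ s₃ with hXdef
  set K := |s₃ - s₂| + |s₁ - s₃| + |s₂ - s₁| + 1 with hKdef
  have hK : 0 < K := by positivity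
  suffices h : ∀ ε > (0:ℝ), |X| ≤ K * ε by
    by_contra hX
    have hXpos : 0 < |X| := abs_pos.mpr hX
    have h2 := h (|X| / (2 * K)) (by positivity)
    have hKK : K * (|X| / (2 * K)) = |X| / 2 := by field_simp
    rw [hKK] at h2
    linarith
  intro ε hε
  obtain ⟨δ₁, hδ₁pos, h₁⟩ := hbump s₁ hs₁ ε hε
  obtain ⟨δ₂, hδ₂pos, h₂⟩ := hbump s₂ hs₂ ε hε
  obtain ⟨δ₃, hδ₃pos, h₃⟩ := hbump s₃ hs₃ ε hε
  set m := min (min δ₁ (min δ₂ δ₃))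
      (min (min (s₁ - a) (b - s₁)) (min (min (s₂ - a) (b - s₂)) (min (s₃ - a) (b - s₃)))) with hm
  have hmpos : 0 < m := by
    simp only [hm, lt_min_iff]
    refine ⟨⟨hδ₁pos, hδ₂pos, hδ₃pos⟩, ⟨?_, ?_⟩, ⟨?_, ?_⟩, ?_, ?_⟩ <;> simp [sub_pos,
      hs₁.1, hs₁.2, hs₂.1, hs₂.2, hs₃.1, hs₃.2]
  set δ := m / 2 with hδ
  have hδpos : 0 < δ := half_pos hmpos
  have hδm : δ < m := by simp [hδ]; linarith
  have hmδ₁ : m ≤ δ₁ := le_trans (min_le_left _ _) (min_le_left _ _)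
  have hmδ₂ : m ≤ δ₂ := le_trans (min_le_left _ _) (le_trans (min_le_right _ _) (min_le_left _ _))
  have hmδ₃ : m ≤ δ₃ := le_trans (min_le_left _ _) (le_trans (min_le_right _ _) (min_le_right _ _))
  have hm1a : m ≤ s₁ - a := le_trans (min_le_right _ _) (le_trans (min_le_left _ _) (min_le_left _ _))
  have hm1b : m ≤ b - s₁ := le_trans (min_le_right _ _) (le_trans (min_le_left _ _) (min_le_right _ _))
  have hm2a : m ≤ s₂ - a := le_trans (min_le_right _ _)
    (le_trans (min_le_right _ _) (le_trans (min_le_left _ _) (min_le_left _ _)))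
  have hm2b : m ≤ b - s₂ := le_trans (min_le_right _ _)
    (le_trans (min_le_right _ _) (le_trans (min_le_left _ _) (min_le_right _ _)))
  have hm3a : m ≤ s₃ - a := le_trans (min_le_right _ _)
    (le_trans (min_le_right _ _) (le_trans (min_le_right _ _) (min_le_left _ _)))
  have hm3b : m ≤ b - s₃ := le_trans (min_le_right _ _)
    (le_trans (min_le_right _ _) (le_trans (min_le_right _ _) (min_le_right _ _)))
  set B₁ : ContDiffBump s₁ := ⟨δ/2, δ, by positivity, by linarith⟩ with hB₁
  set B₂ : ContDiffBump s₂ := ⟨δ/2, δ, by positivity, by linarith⟩ with hB₂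
  set B₃ : ContDiffBump s₃ := ⟨δ/2, δ, by positivity, by linarith⟩ with hB₃
  set ρ₁ := B₁.normed volume with hρ₁
  set ρ₂ := B₂.normed volume with hρ₂
  set ρ₃ := B₃.normed volume with hρ₃
  have hsupp₁ : support ρ₁ ⊆ Set.Ioo a b := by
    rw [hρ₁, B₁.support_normed_eq]
    intro t ht
    rw [Metric.mem_ball, Real.dist_eq, abs_lt] at ht
    have hr : B₁.rOut = δ := rfl
    rw [hr] at ht
    constructor <;> [linarith [hm1a]; linarith [hm1b]]
  have hsupp₂ : support ρ₂ ⊆ Set.Ioo a b := by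
    rw [hρ₂, B₂.support_normed_eq]
    intro t ht
    rw [Metric.mem_ball, Real.dist_eq, abs_lt] at ht
    have hr : B₂.rOut = δ := rfl
    rw [hr] at ht
    constructor <;> [linarith [hm2a]; linarith [hm2b]]
  have hsupp₃ : support ρ₃ ⊆ Set.Ioo a b := by
    rw [hρ₃, B₃.support_normed_eq]
    intro t ht
    rw [Metric.mem_ball, Real.dist_eq, abs_lt] at ht
    have hr : B₃.rOut = δ := rfl
    rw [hr] at ht
    constructor <;> [linarith [hm3a]; linarith [hm3b]]
  set χ : ℝ → ℝ := fun t => (s₃ - s₂) * ρ₁ t + ((s₁ - s₃) * ρ₂ t + (s₂ - s₁) * ρ₃ t) with hχ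
  have hχsupp : support χ ⊆ Set.Ioo a b := by
    intro t ht
    rw [mem_support] at ht
    by_contra htn
    have e1 : ρ₁ t = 0 := by by_contra h; exact htn (hsupp₁ (mem_support.mpr h))
    have e2 : ρ₂ t = 0 := by by_contra h; exact htn (hsupp₂ (mem_support.mpr h))
    have e3 : ρ₃ t = 0 := by by_contra h; exact htn (hsupp₃ (mem_support.mpr h))
    apply ht; rw [hχ]; simp [e1, e2, e3]
  have hχsm : ContDiff ℝ 2 χ := by
    exact ((contDiff_const.mul (bump_contDiff_two s₁ B₁)).add
      ((contDiff_const.mul (bump_contDiff_two s₂ B₂)).add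
        (contDiff_const.mul (bump_contDiff_two s₃ B₃))))
  have hρi₁ : Integrable ρ₁ volume := B₁.integrable_normed
  have hρi₂ : Integrable ρ₂ volume := B₂.integrable_normed
  have hρi₃ : Integrable ρ₃ volume := B₃.integrable_normed
  -- condition 1
  have hc1 : (∫ t in a..b, χ t) = 0 := by
    rw [integral_eq_integral_of_support_subset (hχsupp.trans Set.Ioo_subset_Ioc_self)]
    rw [hχ, integral_three hρi₁ hρi₂ hρi₃, hρ₁, hρ₂, hρ₃,
      B₁.integral_normed, B₂.integral_normed, B₃.integral_normed]
    ring
  -- condition 2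
  have hc2 : (∫ t in a..b, t * χ t) = 0 := by
    have hsub : support (fun t => t * χ t) ⊆ Set.Ioc a b := by
      intro t ht
      rw [mem_support] at ht
      have : χ t ≠ 0 := fun h => ht (by rw [h, mul_zero])
      exact Set.Ioo_subset_Ioc_self (hχsupp this)
    rw [integral_eq_integral_of_support_subset hsub]
    have heq : (fun t : ℝ => t * χ t) = fun t =>
        (s₃ - s₂) * (t * ρ₁ t) + ((s₁ - s₃) * (t * ρ₂ t) + (s₂ - s₁) * (t * ρ₃ t)) := by
      ext t; rw [hχ]; ring
    rw [heq, integral_three (bump_tmul_integrable s₁ B₁) (bump_tmul_integrable s₂ B₂)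
        (bump_tmul_integrable s₃ B₃), bump_moment s₁ B₁, bump_moment s₂ B₂, bump_moment s₃ B₃]
    ring
  have hG := hG0 χ hχsm hχsupp hc1 hc2
  -- convert to ℝ integral and split
  have hφρ₁ : Integrable (fun t => φ t * ρ₁ t) volume :=
    hρi₁.bdd_mul hφm (c := 1) (ae_of_all _ fun t => by simpa using hφb t)
  have hφρ₂ : Integrable (fun t => φ t * ρ₂ t) volume :=
    hρi₂.bdd_mul hφm (c := 1) (ae_of_all _ fun t => by simpa using hφb t)
  have hφρ₃ : Integrable (fun t => φ t * ρ₃ t) volume :=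
    hρi₃.bdd_mul hφm (c := 1) (ae_of_all _ fun t => by simpa using hφb t)
  have hsum : (s₃ - s₂) * (∫ t, φ t * ρ₁ t) + ((s₁ - s₃) * (∫ t, φ t * ρ₂ t)
      + (s₂ - s₁) * (∫ t, φ t * ρ₃ t)) = 0 := by
    have hsub : support (fun t => φ t * χ t) ⊆ Set.Ioc a b := by
      intro t ht
      rw [mem_support] at ht
      have : χ t ≠ 0 := fun h => ht (by rw [h, mul_zero])
      exact Set.Ioo_subset_Ioc_self (hχsupp this)
    rw [integral_eq_integral_of_support_subset hsub] at hG
    have heq : (fun t : ℝ => φ t * χ t) = fun t =>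
        (s₃ - s₂) * (φ t * ρ₁ t) + ((s₁ - s₃) * (φ t * ρ₂ t) + (s₂ - s₁) * (φ t * ρ₃ t)) := by
      ext t; rw [hχ]; ring
    rw [heq, integral_three hφρ₁ hφρ₂ hφρ₃] at hG
    exact hG
  have hA₁ : |(∫ t, φ t * ρ₁ t) - φ s₁| ≤ ε := h₁ B₁ (by show δ < δ₁; linarith)
  have hA₂ : |(∫ t, φ t * ρ₂ t) - φ s₂| ≤ ε := h₂ B₂ (by show δ < δ₂; linarith)
  have hA₃ : |(∫ t, φ t * ρ₃ t) - φ s₃| ≤ ε := h₃ B₃ (by show δ < δ₃; linarith)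
  have hX2 : X = (s₃ - s₂) * (φ s₁ - (∫ t, φ t * ρ₁ t))
      + ((s₁ - s₃) * (φ s₂ - (∫ t, φ t * ρ₂ t)) + (s₂ - s₁) * (φ s₃ - (∫ t, φ t * ρ₃ t))) := by
    rw [hXdef]; linear_combination hsum
  calc |X| ≤ |s₃ - s₂| * |φ s₁ - (∫ t, φ t * ρ₁ t)|
      + (|s₁ - s₃| * |φ s₂ - (∫ t, φ t * ρ₂ t)| + |s₂ - s₁| * |φ s₃ - (∫ t, φ t * ρ₃ t)|) := by
        rw [hX2]
        refine le_trans (abs_add_le _ _) ?_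
        gcongr
        · exact (abs_mul _ _).le
        refine le_trans (abs_add_le _ _) ?_
        gcongr <;> exact (abs_mul _ _).le
    _ ≤ |s₃ - s₂| * ε + (|s₁ - s₃| * ε + |s₂ - s₁| * ε) := by
        gcongr
        · rw [abs_sub_comm]; exact hA₁
        · rw [abs_sub_comm]; exact hA₂
        · rw [abs_sub_comm]; exact hA₃
    _ ≤ K * ε := by rw [hKdef]; nlinarith [abs_nonneg (s₃ - s₂), abs_nonneg (s₁ - s₃), abs_nonneg (s₂ - s₁)]

/-- **Lemma 2.4.** If `x₀` is C² on `[a,b]`, has prescribed endpoint values and prescribed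
integral `k`, and minimizes arc length `∫ √(1 + x'²)` among all such functions, then the
graph of `x₀` is a straight line segment or a circular arc. -/
theorem stmt_2 (a b α β k : ℝ) (hab : a < b) (x₀ : ℝ → ℝ)
    (hx₀ : ContDiffOn ℝ 2 x₀ (Set.Icc a b)) (hx₀a : x₀ a = α) (hx₀b : x₀ b = β)
    (hx₀k : ∫ t in a..b, x₀ t = k)
    (hmin : ∀ x : ℝ → ℝ, ContDiffOn ℝ 2 x (Set.Icc a b) → x a = α → x b = β →
      (∫ t in a..b, x t) = k →
      (∫ t in a..b, Real.sqrt (1 + (deriv x₀ t) ^ 2)) ≤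
        ∫ t in a..b, Real.sqrt (1 + (deriv x t) ^ 2)) :
    (∃ p q : ℝ, ∀ t ∈ Set.Icc a b, x₀ t = p * t + q) ∨
    (∃ c₁ c₂ r : ℝ, 0 < r ∧ ∀ t ∈ Set.Icc a b, (t - c₁) ^ 2 + (x₀ t - c₂) ^ 2 = r ^ 2) := by
  have huIcc : Set.uIcc a b = Set.Icc a b := Set.uIcc_of_le hab.le
  have hIuniq : UniqueDiffOn ℝ (Set.Icc a b) := uniqueDiffOn_Icc hab
  set d := derivWithin x₀ (Set.Icc a b) with hd_def
  have hx₀diff : DifferentiableOn ℝ x₀ (Set.Icc a b) := hx₀.differentiableOn (by norm_num)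
  have hdmem : ∀ t ∈ Set.Icc a b, HasDerivWithinAt x₀ (d t) (Set.Icc a b) t :=
    fun t ht => (hx₀diff t ht).hasDerivWithinAt
  have hdcont : ContinuousOn d (Set.Icc a b) :=
    hx₀.continuousOn_derivWithin hIuniq (by norm_num)
  have hdI : ∀ t ∈ Set.Ioo a b, HasDerivAt x₀ (d t) t := by
    intro t ht
    have hmem : Set.Icc a b ∈ nhds t := Icc_mem_nhds ht.1 ht.2
    have hda := (hx₀diff t (Set.Ioo_subset_Icc_self ht)).differentiableAt hmem
    have hder : d t = deriv x₀ t := derivWithin_of_mem_nhds hmem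
    rw [hder]
    exact hda.hasDerivAt
  -- a.e. congruence helper
  have hcongr : ∀ (f g : ℝ → ℝ), (∀ t ∈ Set.Ioo a b, f t = g t) →
      (∫ t in a..b, f t) = ∫ t in a..b, g t := by
    intro f g hfg
    apply intervalIntegral.integral_congr_ae
    have hb0 : ∀ᵐ (t : ℝ) ∂(volume : Measure ℝ), t ≠ b := by
      rw [ae_iff]
      simpa using measure_singleton b
    filter_upwards [hb0] with t htb htI
    rw [Set.uIoc_of_le hab.le] at htI
    exact hfg t ⟨htI.1, lt_of_le_of_ne htI.2 htb⟩
  -- the target function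
  set φ : ℝ → ℝ := fun t => gg (deriv x₀ t) with hφ_def
  have hφd : ∀ t ∈ Set.Ioo a b, φ t = gg (d t) := fun t ht => by
    simp only [hφ_def]; rw [(hdI t ht).deriv]
  have hφm : AEStronglyMeasurable φ (volume : Measure ℝ) :=
    ((gg_continuous.measurable).comp (measurable_deriv x₀)).aestronglyMeasurable
  have hφb : ∀ t, |φ t| ≤ 1 := fun t => (gg_abs_lt_one _).le
  have hφc : ∀ s ∈ Set.Ioo a b, ContinuousAt φ s := by
    intro s hs
    have h1 : ContinuousOn (fun t => gg (d t)) (Set.Ioo a b) :=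
      gg_continuous.comp_continuousOn (hdcont.mono Set.Ioo_subset_Icc_self)
    have h2 : ContinuousOn φ (Set.Ioo a b) := h1.congr hφd
    exact h2.continuousAt (Ioo_mem_nhds hs.1 hs.2)
  have hbump : ∀ s ∈ Set.Ioo a b, ∀ ε > (0:ℝ), ∃ δ₁ > 0, ∀ (B : ContDiffBump s),
      B.rOut < δ₁ → |(∫ t, φ t * B.normed volume t) - φ s| ≤ ε :=
    fun s hs ε hε => bump_avg hφm hφb (hφc s hs) hε
  -- first variation
  have hx₀int : IntervalIntegrable x₀ volume a b := by
    apply ContinuousOn.intervalIntegrable; rw [huIcc]; exact hx₀.continuousOn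
  have hQcont : ContinuousOn (fun t => Real.sqrt (1 + d t ^ 2)) (Set.Icc a b) :=
    Real.continuous_sqrt.comp_continuousOn (continuousOn_const.add (hdcont.pow 2))
  have hG0 : ∀ χ : ℝ → ℝ, ContDiff ℝ 2 χ → Function.support χ ⊆ Set.Ioo a b →
      (∫ t in a..b, χ t) = 0 → (∫ t in a..b, t * χ t) = 0 →
      (∫ t in a..b, φ t * χ t) = 0 := by
    intro χ hχ hχsupp hint1 hint2
    have hχc : Continuous χ := hχ.continuous
    set η : ℝ → ℝ := fun t => ∫ u in a..t, χ u with hη_def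
    have hηd : ∀ t, HasDerivAt η (χ t) t := fun t =>
      intervalIntegral.integral_hasDerivAt_right (hχc.intervalIntegrable a t)
        (hχc.stronglyMeasurableAtFilter _ _) hχc.continuousAt
    have hηcont : Continuous η := by
      rw [continuous_iff_continuousAt]; exact fun t => (hηd t).continuousAt
    have hη2 : ContDiff ℝ 2 η := by
      rw [show (2 : WithTop ℕ∞) = 1 + 1 by norm_num, contDiff_succ_iff_deriv]
      refine ⟨fun t => (hηd t).differentiableAt, by simp, ?_⟩
      have hderiv : deriv η = χ := funext fun t => (hηd t).deriv
      rw [hderiv]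
      exact hχ.of_le one_le_two
    have hηa : η a = 0 := intervalIntegral.integral_same
    have hηb : η b = 0 := hint1
    have hηint0 : (∫ t in a..b, η t) = 0 := by
      have hibp := intervalIntegral.integral_mul_deriv_eq_deriv_mul
        (u := η) (u' := χ) (v := fun t => t) (v' := fun _ => (1:ℝ))
        (fun x _ => hηd x) (fun x _ => hasDerivAt_id x)
        (hχc.intervalIntegrable a b) intervalIntegrable_const
      simp only [mul_one] at hibp
      have hcomm : (∫ x in a..b, χ x * x) = ∫ x in a..b, x * χ x := by
        apply intervalIntegral.integral_congr; intro x _; exact mul_comm _ _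
      rw [hibp, hηa, hηb, hcomm, hint2]
      ring
    -- quantities
    set G := ∫ t in a..b, gg (d t) * χ t with hG_def
    set C := ∫ t in a..b, (χ t)^2 with hC_def
    have hGGcont : ContinuousOn (fun t => gg (d t) * χ t) (Set.Icc a b) :=
      (gg_continuous.comp_continuousOn hdcont).mul hχc.continuousOn
    have hGint : IntervalIntegrable (fun t => gg (d t) * χ t) volume a b := by
      apply ContinuousOn.intervalIntegrable; rw [huIcc]; exact hGGcont
    have hCint : IntervalIntegrable (fun t => (χ t)^2) volume a b :=
      (hχc.pow 2).intervalIntegrable a b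
    have hQint : IntervalIntegrable (fun t => Real.sqrt (1 + d t ^ 2)) volume a b := by
      apply ContinuousOn.intervalIntegrable; rw [huIcc]; exact hQcont
    have hkey : ∀ ε : ℝ, 0 ≤ ε * G + ε^2/2 * C := by
      intro ε
      set xε : ℝ → ℝ := fun t => x₀ t + ε * η t with hxε_def
      have hxε2 : ContDiffOn ℝ 2 xε (Set.Icc a b) :=
        hx₀.add (contDiff_const.mul hη2).contDiffOn
      have hxεa : xε a = α := by rw [hxε_def]; simp [hηa, hx₀a]
      have hxεb : xε b = β := by rw [hxε_def]; simp [hηb, hx₀b]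
      have hηint : IntervalIntegrable (fun t => ε * η t) volume a b :=
        (continuous_const.mul hηcont).intervalIntegrable a b
      have hxεk : (∫ t in a..b, xε t) = k := by
        rw [hxε_def, intervalIntegral.integral_add hx₀int hηint,
          intervalIntegral.integral_const_mul, hηint0, hx₀k]
        ring
      have hL := hmin xε hxε2 hxεa hxεb hxεk
      have hLHS : (∫ t in a..b, Real.sqrt (1 + (deriv x₀ t) ^ 2))
          = ∫ t in a..b, Real.sqrt (1 + d t ^ 2) := by
        apply hcongr; intro t ht; rw [(hdI t ht).deriv]
      have hRHS : (∫ t in a..b, Real.sqrt (1 + (deriv xε t) ^ 2))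
          = ∫ t in a..b, Real.sqrt (1 + (d t + ε * χ t) ^ 2) := by
        apply hcongr; intro t ht
        have hx : HasDerivAt xε (d t + ε * χ t) t := (hdI t ht).add ((hηd t).const_mul ε)
        rw [hx.deriv]
      rw [hLHS, hRHS] at hL
      have hmono : (∫ t in a..b, Real.sqrt (1 + (d t + ε * χ t) ^ 2))
          ≤ ∫ t in a..b, (Real.sqrt (1 + d t ^ 2)
            + (ε * (gg (d t) * χ t) + ε^2/2 * (χ t)^2)) := by
        apply intervalIntegral.integral_mono_on hab.le
        · apply ContinuousOn.intervalIntegrable; rw [huIcc]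
          exact Real.continuous_sqrt.comp_continuousOn (continuousOn_const.add
            (((hdcont.add (continuous_const.mul hχc).continuousOn)).pow 2))
        · apply ContinuousOn.intervalIntegrable; rw [huIcc]
          exact hQcont.add ((continuousOn_const.mul hGGcont).add
            (continuousOn_const.mul (hχc.pow 2).continuousOn))
        · intro t _
          have := key_ineq (d t) (ε * χ t)
          nlinarith [this]
      have hsplit : (∫ t in a..b, (Real.sqrt (1 + d t ^ 2)
            + (ε * (gg (d t) * χ t) + ε^2/2 * (χ t)^2)))
          = (∫ t in a..b, Real.sqrt (1 + d t ^ 2)) + (ε * G + ε^2/2 * C) := by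
        have h23 : IntervalIntegrable
            (fun t => ε * (gg (d t) * χ t) + ε^2/2 * (χ t)^2) volume a b := by
          exact ((hGint.const_mul ε).add (hCint.const_mul (ε^2/2)))
        rw [intervalIntegral.integral_add hQint h23,
          intervalIntegral.integral_add (hGint.const_mul ε) (hCint.const_mul (ε^2/2)),
          intervalIntegral.integral_const_mul, intervalIntegral.integral_const_mul]
      rw [hsplit] at hmono
      linarith
    have hCnn : 0 ≤ C := intervalIntegral.integral_nonneg hab.le (fun t _ => sq_nonneg _)
    have hGzero : G = 0 := by
      by_contra h0
      have hC1 : (0:ℝ) < C + 1 := by linarith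
      have hk := hkey (-G / (C + 1))
      have heq : (-G/(C+1))*G + (-G/(C+1))^2/2*C = G^2/(C+1)^2 * (C/2 - (C+1)) := by
        field_simp; ring
      rw [heq] at hk
      have hG2 : 0 < G^2 := by
        rcases lt_or_gt_of_ne h0 with h | h <;> nlinarith
      have hp : 0 < G^2/(C+1)^2 := div_pos hG2 (by positivity)
      nlinarith
    have hfin : (fun t => φ t * χ t) = fun t => gg (d t) * χ t := by
      funext t
      rcases eq_or_ne (χ t) 0 with h0 | h0
      · rw [h0, mul_zero, mul_zero]
      · rw [hφd t (hχsupp (Function.mem_support.mpr h0))]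
    rw [hfin]
    exact hGzero
  -- fundamental lemma
  have htri := fund_lemma hab φ hφm hφb hφc hbump hG0
  set u := a + (b - a)/3 with hu_def
  set v := a + (b - a)*2/3 with hv_def
  have hu : u ∈ Set.Ioo a b := by constructor <;> [skip; skip] <;> rw [hu_def] <;> linarith
  have hv : v ∈ Set.Ioo a b := by constructor <;> [skip; skip] <;> rw [hv_def] <;> linarith
  have hvu : v - u = (b - a)/3 := by rw [hu_def, hv_def]; ring
  have hvu0 : v - u ≠ 0 := by rw [hvu]; exact ne_of_gt (by linarith)
  set lam := (φ v - φ u) / (v - u) with hlam_def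
  set cc := φ u - lam * u with hcc_def
  have hIoo : ∀ t ∈ Set.Ioo a b, φ t = lam * t + cc := by
    intro t ht
    have h3 := htri t ht u hu v hv
    have hlamcc : lam * (v - u) = φ v - φ u := by
      rw [hlam_def, div_mul_cancel₀ _ hvu0]
    have key : φ t * (v - u) = (φ v - φ u) * t + (φ u * (v - u) - (φ v - φ u) * u) := by
      linear_combination h3
    have h4 : φ t * (v - u) = lam * t * (v - u) + cc * (v - u) := by
      rw [hcc_def]
      linear_combination key - (t - u) * hlamcc
    have h5 : (φ t - (lam * t + cc)) * (v - u) = 0 := by linear_combination h4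
    have h6 := (mul_eq_zero.mp h5).resolve_right hvu0
    linarith
  have haff : ∀ t ∈ Set.Icc a b, gg (d t) = lam * t + cc := by
    have hz := zeroOn hab (f := fun t => gg (d t) - (lam * t + cc))
      (((gg_continuous.comp_continuousOn hdcont)).sub
        ((continuousOn_const.mul continuousOn_id).add continuousOn_const))
      (fun t ht => by show gg (d t) - (lam * t + cc) = 0; rw [← hφd t ht, hIoo t ht]; ring)
    intro t ht
    have h7 : gg (d t) - (lam * t + cc) = 0 := hz t ht
    linarith
  clear_value d lam cc
  clear hIoo htri hu hv hvu hvu0 hlam_def hcc_def hu_def hv_def hφd hφm hφb hφc hbump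
    hG0 hφ_def hcongr hdI hx₀int hQcont hx₀k hmin hx₀diff hd_def
  clear φ u v
  by_cases hlam : lam = 0
  · -- line case
    set p := cc / Real.sqrt (1 - cc^2) with hp_def
    refine Or.inl ⟨p, α - p * a, ?_⟩
    have hdp : ∀ t ∈ Set.Icc a b, d t = p := by
      intro t ht
      have h1 := haff t ht
      rw [hlam, zero_mul, zero_add] at h1
      rw [hp_def, ← h1, gg_recover]
    have hder : ∀ t ∈ Set.Icc a b,
        HasDerivWithinAt (fun s => x₀ s - p * s) 0 (Set.Icc a b) t := by
      intro t ht
      have h1 := (hdmem t ht).sub (((hasDerivAt_id t).const_mul p).hasDerivWithinAt)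
      have h2 : d t - p * 1 = 0 := by rw [hdp t ht]; ring
      rwa [h2] at h1
    intro t ht
    have := constOn hder t ht
    rw [hx₀a] at this
    linarith [this]
  · -- circle case
    have hu2 : ∀ t ∈ Set.Icc a b, |lam * t + cc| < 1 := fun t ht => by
      rw [← haff t ht]; exact gg_abs_lt_one (d t)
    have hpos : ∀ t ∈ Set.Icc a b, 0 < 1 - (lam * t + cc)^2 := by
      intro t ht
      have h1 := hu2 t ht
      nlinarith [sq_abs (lam * t + cc), abs_nonneg (lam * t + cc)]
    have hdt : ∀ t ∈ Set.Icc a b, d t = (lam * t + cc) / Real.sqrt (1 - (lam * t + cc)^2) := by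
      intro t ht
      conv_lhs => rw [← gg_recover (d t)]
      rw [haff t ht]
    set H : ℝ → ℝ := fun t => x₀ t + (1/lam) * Real.sqrt (1 - (lam * t + cc)^2) with hH_def
    have hHder : ∀ t ∈ Set.Icc a b, HasDerivWithinAt H 0 (Set.Icc a b) t := by
      intro t ht
      have hlin : HasDerivAt (fun s => lam * s + cc) lam t := by
        simpa using ((hasDerivAt_id t).const_mul lam).add_const cc
      have hsq1 : HasDerivAt (fun s => (lam * s + cc)^2) (2 * (lam * t + cc) * lam) t := by
        simpa using hlin.fun_pow 2
      have hw : HasDerivAt (fun s => 1 - (lam * s + cc)^2) (-(2 * (lam * t + cc) * lam)) t :=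
        hsq1.const_sub 1
      have hsqrt : HasDerivAt (fun s => Real.sqrt (1 - (lam * s + cc)^2))
          (1 / (2 * Real.sqrt (1 - (lam * t + cc)^2)) * (-(2 * (lam * t + cc) * lam))) t :=
        (Real.hasDerivAt_sqrt (hpos t ht).ne').comp t hw
      have hcomb := (hdmem t ht).add ((hsqrt.const_mul (1/lam)).hasDerivWithinAt)
      have hval : d t + (1/lam) * (1 / (2 * Real.sqrt (1 - (lam * t + cc)^2))
          * (-(2 * (lam * t + cc) * lam))) = 0 := by
        rw [hdt t ht]
        have hs0 : Real.sqrt (1 - (lam * t + cc)^2) ≠ 0 :=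
          (Real.sqrt_pos.mpr (hpos t ht)).ne'
        field_simp
        ring
      rwa [hval] at hcomb
    set c₂ := x₀ a + (1/lam) * Real.sqrt (1 - (lam * a + cc)^2) with hc₂_def
    refine Or.inr ⟨-cc/lam, c₂, 1/|lam|, one_div_pos.mpr (abs_pos.mpr hlam), ?_⟩
    intro t ht
    have hHt := constOn hHder t ht
    have hsq' : Real.sqrt (1 - (lam * t + cc)^2)^2 = 1 - (lam * t + cc)^2 :=
      Real.sq_sqrt (hpos t ht).le
    have hx : x₀ t - c₂ = -(1/lam) * Real.sqrt (1 - (lam * t + cc)^2) := by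
      rw [hH_def] at hHt
      simp only at hHt
      rw [hc₂_def]
      linarith [hHt]
    rw [hx]
    rw [show (1/|lam|)^2 = 1/lam^2 by rw [div_pow, one_pow, sq_abs]]
    field_simp
    rw [mul_comm lam t] at hsq'
    linear_combination hsq'
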